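/- For every positive integer n, |g⁻¹(n)| = ∑_{d∣n} μ(n/d)² · C_Ω(d). -/

import Mathlib

open ArithmeticFunction
open scoped ArithmeticFunction.Omega ArithmeticFunction.omega ArithmeticFunction.Moebius ArithmeticFunction.zeta


/-- `C_Ω(n) = Ω(n)! / (α₁! ⋯ α_r!)` is the multinomial coefficient of the exponents in the
prime factorization `n = p₁^{α₁} ⋯ p_r^{α_r}`; by convention `C_Ω(1) = 1`. -/
noncomputable def COmega (n : ℕ) : ℝ :=
  ((ArithmeticFunction.cardFactors n).factorial : ℝ) /
    ∏ p ∈ n.primeFactors, ((n.factorization p).factorial : ℝ)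

lemma omega_eq_sum (n : ℕ) : (Ω n : ℕ) = ∑ p ∈ n.primeFactors, n.factorization p := by
  rw [cardFactors_apply, ← Nat.support_factorization]
  have := Multiset.toFinsupp_sum_eq (n.primeFactorsList : Multiset ℕ)
  rw [← Nat.factorization_eq_primeFactorsList_multiset] at this
  simpa [Finsupp.sum] using this.symm

lemma prodfact_pos (n : ℕ) : (0:ℝ) < ∏ p ∈ n.primeFactors, ((n.factorization p).factorial : ℝ) :=
  Finset.prod_pos fun p _ => by positivity

lemma COmega_nonneg (n : ℕ) : 0 ≤ COmega n :=
  div_nonneg (by positivity) (prodfact_pos n).le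

lemma COmega_one : COmega 1 = 1 := by simp [COmega]

lemma COmega_rec {n : ℕ} (hn : 2 ≤ n) :
    COmega n = ∑ p ∈ n.primeFactors, COmega (n / p) := by
  have hn0 : n ≠ 0 := by omega
  set P := n.primeFactors with hP
  set D : ℝ := ∏ p ∈ P, ((n.factorization p).factorial : ℝ) with hD
  have hDpos : 0 < D := prodfact_pos n
  have key : ∀ p ∈ P, COmega (n / p) =
      ((Ω n - 1).factorial : ℝ) * (n.factorization p) / D := by
    intro p hp
    have hpp : p.Prime := Nat.prime_of_mem_primeFactors hp
    have hpd : p ∣ n := Nat.dvd_of_mem_primeFactors hp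
    have hnp0 : n / p ≠ 0 := Nat.div_ne_zero_iff.mpr ⟨hpp.pos.ne', Nat.le_of_dvd (by omega) hpd⟩
    have hfe : (n / p).factorization = n.factorization - Finsupp.single p 1 := by
      rw [Nat.factorization_div hpd, hpp.factorization]
    have hαp : 1 ≤ n.factorization p := (Nat.Prime.factorization_pos_of_dvd hpp hn0 hpd)
    -- Ω(n/p) = Ω n - 1
    have hΩ : (Ω (n / p) : ℕ) = Ω n - 1 := by
      have : (Ω n : ℕ) = Ω (n / p) + 1 := by
        conv_lhs => rw [← Nat.div_mul_cancel hpd]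
        rw [cardFactors_mul hnp0 hpp.pos.ne', cardFactors_apply_prime hpp]
      omega
    -- product over primeFactors of n/p equals product over P
    have hsub : (n / p).primeFactors ⊆ P := Nat.primeFactors_mono (Nat.div_dvd_of_dvd hpd) hn0
    have hprod : ∏ q ∈ (n / p).primeFactors, (((n / p).factorization q).factorial : ℝ)
        = ∏ q ∈ P, (((n / p).factorization q).factorial : ℝ) := by
      refine (Finset.prod_subset hsub fun q hq hq' => ?_)
      have : (n / p).factorization q = 0 := by
        rw [← Finsupp.notMem_support_iff, Nat.support_factorization]; exact hq'
      simp [this]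
    have hval : ∀ q ∈ P, (n / p).factorization q =
        n.factorization q - (if q = p then 1 else 0) := by
      intro q _
      rw [hfe]
      rcases eq_or_ne q p with rfl | h
      · simp [Finsupp.single_apply]
      · simp [Finsupp.single_apply, h, (by simpa [eq_comm] using h : ¬ p = q)]
    have hprod2 : ∏ q ∈ P, (((n / p).factorization q).factorial : ℝ)
        = ((n.factorization p - 1).factorial : ℝ) *
          ∏ q ∈ P.erase p, ((n.factorization q).factorial : ℝ) := by
      rw [← Finset.mul_prod_erase P _ hp]
      congr 1
      · rw [hval p hp]; simp
      · refine Finset.prod_congr rfl fun q hq => ?_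
        rw [hval q (Finset.mem_of_mem_erase hq)]
        simp [Finset.ne_of_mem_erase hq]
    have hDsplit : D = (n.factorization p) * (((n.factorization p - 1).factorial : ℝ) *
          ∏ q ∈ P.erase p, ((n.factorization q).factorial : ℝ)) := by
      rw [hD, ← Finset.mul_prod_erase P _ hp, ← mul_assoc]
      congr 2
      rw [← Nat.cast_mul, ← Nat.succ_pred_eq_of_pos hαp]
      simp [Nat.factorial_succ]
    rw [COmega, hΩ, hprod, hprod2]
    rw [hDsplit]
    have h1 : (0:ℝ) < ((n.factorization p - 1).factorial : ℝ) *
          ∏ q ∈ P.erase p, ((n.factorization q).factorial : ℝ) := by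
      positivity
    field_simp
  rw [Finset.sum_congr rfl key]
  rw [← Finset.sum_div, ← Finset.mul_sum, ← Nat.cast_sum, ← omega_eq_sum]
  have hΩ1 : 1 ≤ (Ω n : ℕ) := by
    have := cardFactors_eq_one_iff_prime (n := n)
    rcases Nat.exists_prime_and_dvd (by omega : n ≠ 1) with ⟨p, hpp, hpd⟩
    have : Ω (p * (n / p)) = Ω p + Ω (n / p) := cardFactors_mul hpp.pos.ne'
      (Nat.div_ne_zero_iff.mpr ⟨hpp.pos.ne', Nat.le_of_dvd (by omega) hpd⟩)
    rw [Nat.mul_div_cancel' hpd] at this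
    rw [this, cardFactors_apply_prime hpp]; omega
  rw [COmega]
  congr 1
  rw [← Nat.succ_pred_eq_of_pos hΩ1]
  simp [Nat.factorial_succ, mul_comm]

noncomputable def hP : ArithmeticFunction ℝ :=
  ⟨fun n => if n = 1 ∨ n.Prime then 1 else 0, by simp [Nat.not_prime_zero]⟩

noncomputable def hL : ArithmeticFunction ℝ :=
  ⟨fun n => if n = 0 then 0 else (-1:ℝ) ^ (Ω n : ℕ) * COmega n, by simp⟩

lemma omega_card (n : ℕ) : (ω n : ℕ) = n.primeFactors.card := by
  rw [cardDistinctFactors_apply, Nat.primeFactors, List.card_toFinset]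

lemma filter_prime_divisors {n : ℕ} (hn : n ≠ 0) :
    n.divisors.filter Nat.Prime = n.primeFactors := by
  ext p
  simp [Nat.mem_primeFactors, Nat.mem_divisors, hn, and_comm]

lemma cardFactors_div {n p : ℕ} (hp : p ∈ n.primeFactors) (hn : n ≠ 0) :
    (Ω (n / p) : ℕ) = Ω n - 1 ∧ n / p ≠ 0 ∧ 1 ≤ (Ω n : ℕ) := by
  have hpp : p.Prime := Nat.prime_of_mem_primeFactors hp
  have hpd : p ∣ n := Nat.dvd_of_mem_primeFactors hp
  have hnp0 : n / p ≠ 0 := Nat.div_ne_zero_iff.mpr ⟨hpp.pos.ne',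
    Nat.le_of_dvd (Nat.pos_of_ne_zero hn) hpd⟩
  have : (Ω n : ℕ) = Ω (n / p) + 1 := by
    conv_lhs => rw [← Nat.div_mul_cancel hpd]
    rw [cardFactors_mul hnp0 hpp.pos.ne', cardFactors_apply_prime hpp]
  exact ⟨by omega, hnp0, by omega⟩

lemma hP_hL : hP * hL = 1 := by
  ext n
  rw [mul_apply, Nat.sum_divisorsAntidiagonal (fun a b => hP a * hL b)]
  rcases Nat.eq_zero_or_pos n with rfl | hn0
  · simp
  rcases eq_or_lt_of_le (Nat.succ_le_of_lt hn0) with h1 | h2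
  · rw [← h1]; simp [hP, hL, COmega, Nat.divisors_one]
  have hn0' : n ≠ 0 := by omega
  have hsplit : ∀ d ∈ n.divisors, hP d * hL (n / d) =
      (if d = 1 then hL n else 0) + (if d.Prime then hL (n / d) else 0) := by
    intro d hd
    rcases eq_or_ne d 1 with rfl | hd1
    · simp [hP, Nat.not_prime_one]
    by_cases hdp : d.Prime
    · simp [hP, hd1, hdp]
    · simp [hP, hd1, hdp]
  rw [Finset.sum_congr rfl hsplit, Finset.sum_add_distrib]
  rw [Finset.sum_ite_eq' n.divisors 1 (fun _ => hL n), ← Finset.sum_filter,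
    filter_prime_divisors hn0']
  have h1d : (1 : ℕ) ∈ n.divisors := Nat.one_mem_divisors.mpr hn0'
  simp only [h1d, if_true]
  have hΩ1 : 1 ≤ (Ω n : ℕ) := by
    rcases Nat.exists_prime_and_dvd (by omega : n ≠ 1) with ⟨p, hpp, hpd⟩
    have hmem : p ∈ n.primeFactors := Nat.mem_primeFactors.mpr ⟨hpp, hpd, hn0'⟩
    exact (cardFactors_div hmem hn0').2.2
  have hterm : ∀ p ∈ n.primeFactors, hL (n / p) = (-1:ℝ)^((Ω n : ℕ) - 1) * COmega (n / p) := by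
    intro p hp
    obtain ⟨hΩ, hnp0, -⟩ := cardFactors_div hp hn0'
    simp only [hL, coe_mk, hnp0, if_false, hΩ]
  rw [Finset.sum_congr rfl hterm, ← Finset.mul_sum, ← COmega_rec h2]
  have : (-1:ℝ)^((Ω n : ℕ)) = -(-1:ℝ)^((Ω n : ℕ) - 1) := by
    rw [← Nat.succ_pred_eq_of_pos hΩ1, pow_succ]; ring_nf
    rw [Nat.succ_sub_one]
  simp only [hL, coe_mk, hn0', if_false, this]
  have : (1 : ArithmeticFunction ℝ) n = 0 := by
    rw [one_apply, if_neg (by omega)]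
  rw [this]; ring

lemma g_eq (g : ArithmeticFunction ℝ)
    (hg : ∀ n : ℕ, 0 < n → g n = (ArithmeticFunction.cardDistinctFactors n : ℝ) + 1) :
    g = (ζ : ArithmeticFunction ℕ) * hP := by
  ext n
  rcases Nat.eq_zero_or_pos n with rfl | hn
  · simp
  have hn0 : n ≠ 0 := hn.ne'
  rw [hg n hn, coe_zeta_mul_apply]
  have : ∀ d ∈ n.divisors, hP d = (if d = 1 then (1:ℝ) else 0) + (if d.Prime then 1 else 0) := by
    intro d hd
    rcases eq_or_ne d 1 with rfl | hd1
    · simp [hP, Nat.not_prime_one]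
    by_cases hdp : d.Prime <;> simp [hP, hd1, hdp]
  rw [Finset.sum_congr rfl this, Finset.sum_add_distrib,
    Finset.sum_ite_eq' n.divisors 1 (fun _ => (1:ℝ)), ← Finset.sum_filter,
    filter_prime_divisors hn0]
  have h1d : (1 : ℕ) ∈ n.divisors := Nat.one_mem_divisors.mpr hn0
  simp [h1d, omega_card, add_comm]

lemma moebius_real (m : ℕ) :
    ((μ m : ℤ) : ℝ) = (-1:ℝ) ^ (Ω m : ℕ) * ((μ m : ℤ) : ℝ) ^ 2 := by
  by_cases hm : Squarefree m
  · rw [moebius_apply_of_squarefree hm]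
    push_cast
    rw [← pow_mul, mul_comm (Ω m : ℕ) 2, pow_mul, neg_one_sq, one_pow, mul_one]
  · rw [moebius_eq_zero_of_not_squarefree hm]; norm_num

/-- Let `g` be the arithmetic function with `g(n) = ω(n) + 1` for `n ≥ 1`
and let `ginv` be its Dirichlet inverse (characterized by `g * ginv = 1`).  Then for every
positive integer `n`, `|ginv(n)| = ∑_{d ∣ n} μ(n/d)² · C_Ω(d)`. -/
theorem stmt_10 (g ginv : ArithmeticFunction ℝ)
    (hg : ∀ n : ℕ, 0 < n → g n = (ArithmeticFunction.cardDistinctFactors n : ℝ) + 1)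
    (hginv : g * ginv = 1) (n : ℕ) (hn : 0 < n) :
    |ginv n| =
      ∑ d ∈ n.divisors, (ArithmeticFunction.moebius (n / d) : ℝ) ^ 2 * COmega d := by
  have hn0 : n ≠ 0 := hn.ne'
  have hF : g * ((↑(μ : ArithmeticFunction ℤ) : ArithmeticFunction ℝ) * hL) = 1 := by
    rw [g_eq g hg]
    have : ((ζ : ArithmeticFunction ℕ) : ArithmeticFunction ℝ) * hP *
        ((↑(μ : ArithmeticFunction ℤ) : ArithmeticFunction ℝ) * hL)
        = (((ζ : ArithmeticFunction ℕ) : ArithmeticFunction ℝ) *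
           (↑(μ : ArithmeticFunction ℤ) : ArithmeticFunction ℝ)) * (hP * hL) := by ring
    rw [this, coe_zeta_mul_coe_moebius, hP_hL, one_mul]
  have hgeq : ginv = (↑(μ : ArithmeticFunction ℤ) : ArithmeticFunction ℝ) * hL := by
    calc ginv = 1 * ginv := (one_mul _).symm
    _ = (((↑(μ : ArithmeticFunction ℤ) : ArithmeticFunction ℝ) * hL) * g) * ginv := by
        rw [mul_comm _ g, hF]
    _ = ((↑(μ : ArithmeticFunction ℤ) : ArithmeticFunction ℝ) * hL) * (g * ginv) := by ring
    _ = _ := by rw [hginv, mul_one]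
  rw [hgeq, mul_apply,
    Nat.sum_divisorsAntidiagonal' (f := fun a b =>
      ((↑(μ : ArithmeticFunction ℤ) : ArithmeticFunction ℝ)) a * hL b)]
  have hterm : ∀ d ∈ n.divisors,
      ((↑(μ : ArithmeticFunction ℤ) : ArithmeticFunction ℝ)) (n / d) * hL d =
      (-1:ℝ) ^ (Ω n : ℕ) * (((μ (n / d) : ℤ) : ℝ) ^ 2 * COmega d) := by
    intro d hd
    obtain ⟨hdvd, -⟩ := Nat.mem_divisors.mp hd
    have hd0 : d ≠ 0 := by rintro rfl; exact hn0 (Nat.eq_zero_of_zero_dvd hdvd)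
    have hnd0 : n / d ≠ 0 := Nat.div_ne_zero_iff.mpr ⟨hd0, Nat.le_of_dvd hn hdvd⟩
    have hOmega : (Ω (n / d) : ℕ) + Ω d = Ω n := by
      rw [← cardFactors_mul hnd0 hd0, Nat.div_mul_cancel hdvd]
    rw [intCoe_apply]
    simp only [hL, coe_mk, hd0, if_false]
    conv_lhs => rw [moebius_real (n / d)]
    rw [← hOmega, pow_add]
    ring
  rw [Finset.sum_congr rfl hterm, ← Finset.mul_sum, abs_mul, abs_pow, abs_neg, abs_one,
    one_pow, one_mul, abs_of_nonneg]
  exact Finset.sum_nonneg fun d _ => mul_nonneg (sq_nonneg _) (COmega_nonneg d)
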